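/- Let H be a symmetric matrix partitioned into blocks H = [[P, P12],[P21, P22]] with P an invertible d×d block (so P12 = P21^T), let G = [[G11, G12],[0, G22]] be a conformally partitioned block upper-triangular matrix, and let Σ_e = [[Σ11, Σ12],[Σ21, Σ22]] be a conformally partitioned matrix. Suppose H = G H G^T + Σ_e. Define G̃ = G11 + G12 P21 P^{-1} and the Schur complement H/P = P22 − P21 P^{-1} P12. Then the (1,1) block satisfies the Lyapunov equation P = G̃ P G̃^T + Σ11 + G12 (H/P) G12^T. -/
import Mathlib


open Matrix in
/-- Block reduction of a discrete Lyapunov equation: if `H = [[P, P12],[P21, P22]]`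
is symmetric with `P` invertible, `G = [[G11, G12],[0, G22]]` is block
upper-triangular, `Σₑ = [[S11, S12],[S21, S22]]`, and `H = G H Gᵀ + Σₑ`, then
with `G̃ = G11 + G12 P21 P⁻¹` and Schur complement `H/P = P22 − P21 P⁻¹ P12`,
the `(1,1)` block satisfies `P = G̃ P G̃ᵀ + S11 + G12 (H/P) G12ᵀ`. -/
theorem lyapunov_block_schur_reduction {d q : ℕ}
    (P : Matrix (Fin d) (Fin d) ℝ) (P12 : Matrix (Fin d) (Fin q) ℝ)
    (P21 : Matrix (Fin q) (Fin d) ℝ) (P22 : Matrix (Fin q) (Fin q) ℝ)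
    (G11 : Matrix (Fin d) (Fin d) ℝ) (G12 : Matrix (Fin d) (Fin q) ℝ)
    (G22 : Matrix (Fin q) (Fin q) ℝ)
    (S11 : Matrix (Fin d) (Fin d) ℝ) (S12 : Matrix (Fin d) (Fin q) ℝ)
    (S21 : Matrix (Fin q) (Fin d) ℝ) (S22 : Matrix (Fin q) (Fin q) ℝ)
    (hHsymm : (fromBlocks P P12 P21 P22).IsSymm)
    (hPinv : IsUnit P.det)
    (hLyap : fromBlocks P P12 P21 P22 =
      fromBlocks G11 G12 0 G22 * fromBlocks P P12 P21 P22 *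
        (fromBlocks G11 G12 0 G22)ᵀ + fromBlocks S11 S12 S21 S22) :
    P = (G11 + G12 * P21 * P⁻¹) * P * (G11 + G12 * P21 * P⁻¹)ᵀ +
        S11 + G12 * (P22 - P21 * P⁻¹ * P12) * G12ᵀ := by
  have hsymm' : fromBlocks Pᵀ P21ᵀ P12ᵀ P22ᵀ = fromBlocks P P12 P21 P22 := by
    rw [← fromBlocks_transpose]; exact hHsymm
  have hPT : Pᵀ = P := congrArg Matrix.toBlocks₁₁ hsymm'
  have hP12 : P21ᵀ = P12 := congrArg Matrix.toBlocks₁₂ hsymm'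
  have hinv : P⁻¹ * P = 1 := Matrix.nonsing_inv_mul P hPinv
  have hinv' : P * P⁻¹ = 1 := Matrix.mul_nonsing_inv P hPinv
  have hinvT : (P⁻¹)ᵀ = P⁻¹ := by
    rw [Matrix.transpose_nonsing_inv, hPT]
  have h11 : P = G11 * P * G11ᵀ + G11 * P12 * G12ᵀ + G12 * P21 * G11ᵀ +
      G12 * P22 * G12ᵀ + S11 := by
    have h0 := congrArg Matrix.toBlocks₁₁ hLyap
    simp only [Matrix.fromBlocks_multiply, Matrix.fromBlocks_transpose, Matrix.fromBlocks_add,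
      Matrix.toBlocks_fromBlocks₁₁, Matrix.mul_add, Matrix.add_mul, Matrix.mul_assoc,
      Matrix.mul_zero, Matrix.zero_mul, add_zero, zero_add] at h0
    refine h0.trans ?_
    simp only [Matrix.mul_assoc]
    abel
  have h1 : (G11 + G12 * P21 * P⁻¹) * P = G11 * P + G12 * P21 := by
    rw [add_mul, Matrix.mul_assoc (G12 * P21), hinv, mul_one]
  have h2 : (G11 + G12 * P21 * P⁻¹)ᵀ = G11ᵀ + P⁻¹ * (P12 * G12ᵀ) := by
    simp [transpose_add, transpose_mul, hinvT, hP12, Matrix.mul_assoc]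
  have key : (G11 + G12 * P21 * P⁻¹) * P * (G11 + G12 * P21 * P⁻¹)ᵀ
      = G11 * P * G11ᵀ + G11 * P12 * G12ᵀ + G12 * P21 * G11ᵀ +
        G12 * P21 * (P⁻¹ * P12) * G12ᵀ := by
    rw [h1, h2, add_mul, mul_add, mul_add]
    have : G11 * P * (P⁻¹ * (P12 * G12ᵀ)) = G11 * P12 * G12ᵀ := by
      rw [← Matrix.mul_assoc, Matrix.mul_assoc G11, hinv', Matrix.mul_one,
        Matrix.mul_assoc]
    rw [this]
    simp only [Matrix.mul_assoc]
    abel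
  rw [key]
  conv_lhs => rw [h11]
  simp only [Matrix.sub_mul, Matrix.mul_sub, Matrix.mul_assoc]
  abel
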